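/- Let P be a finite set of points in general position in ℝ², let s, s′ ∈ P, and let a, b, c ∈ P be such that the quadrilaterals s,a,b,c and s′,a,b,c are both convex and empty of points of P, and s,a,b,c,s′ are the vertices of a convex pentagon in that order. Then there exists a point s″ ∈ P (contained in the closed triangle s,c,s′) such that s,a,b,c,s″ is a 5-hole of P. -/

import Mathlib

open scoped Classical

noncomputable section

abbrev Pt : Type := EuclideanSpace ℝ (Fin 2)

/-- No three distinct points of `P` are collinear. -/
def GenPos (P : Set Pt) : Prop :=
  ∀ a ∈ P, ∀ b ∈ P, ∀ c ∈ P, a ≠ b → a ≠ c → b ≠ c → ¬ Collinear ℝ ({a, b, c} : Set Pt)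

/-- A set of points is in convex position if every point is an extreme point:
no point lies in the convex hull of the others. -/
def ConvexPos (S : Set Pt) : Prop := ∀ p ∈ S, p ∉ convexHull ℝ (S \ {p})

/-- The 5-holes of `P`: 5-element subsets of `P` in convex position whose
convex hull has no point of `P` in its interior. -/
def Holes5 (P : Set Pt) : Set (Finset Pt) :=
  {H | H.card = 5 ∧ ↑H ⊆ P ∧ ConvexPos ↑H ∧
    ∀ x ∈ P, x ∉ interior (convexHull ℝ (H : Set Pt))}

/-- Orientation determinant of the triple `(o, a, b)`. -/
def det2 (o a b : Pt) : ℝ :=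
  (a 0 - o 0) * (b 1 - o 1) - (a 1 - o 1) * (b 0 - o 0)

/-- `v` lists the vertices of a strictly convex polygon in cyclic order:
for every edge `v i v (i+1)`, all other vertices lie strictly on the same side. -/
def ConvexCyclicOrder {n : ℕ} [NeZero n] (v : Fin n → Pt) : Prop :=
  ∃ σ : ℝ, (σ = 1 ∨ σ = -1) ∧
    ∀ i j : Fin n, j ≠ i → j ≠ i + 1 → 0 < σ * det2 (v i) (v (i + 1)) (v j)

/-- `x` lies in the closed angular region at `p` spanned by the rays from `p`
through `a` and through `c` (the convex cone generated by the two rays). -/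
def InAngle (a p c x : Pt) : Prop :=
  ∃ s t : ℝ, 0 ≤ s ∧ 0 ≤ t ∧ x = p + s • (a - p) + t • (c - p)

/-- The extreme points (convex-hull vertices) of a planar point set. -/
def extremePts (P : Set Pt) : Set Pt := {p ∈ P | p ∉ convexHull ℝ (P \ {p})}

/-- What remains of `P` after peeling off the first `n` convex layers. -/
def layerRest (P : Set Pt) : ℕ → Set Pt
  | 0 => P
  | n + 1 => layerRest P n \ extremePts (layerRest P n)

/-- The `i`-th convex layer of `P` (0-indexed). -/
def layer (P : Set Pt) (i : ℕ) : Set Pt := extremePts (layerRest P i)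

/-- The number of convex layers of `P`. -/
def numLayers (P : Set Pt) : ℕ := {i | (layer P i).Nonempty}.ncard
-- AUX LEMMAS (to be inserted before stmt8)
lemma pt_ext (x y : Pt) (h0 : x 0 = y 0) (h1 : x 1 = y 1) : x = y := by
  ext i; fin_cases i <;> assumption

lemma pt_coord_add (x y : Pt) (i : Fin 2) : (x + y) i = x i + y i := rfl
lemma pt_coord_smul (r : ℝ) (x : Pt) (i : Fin 2) : (r • x) i = r * x i := rfl
lemma pt_coord_sub (x y : Pt) (i : Fin 2) : (x - y) i = x i - y i := rfl

lemma det2_zero_0 (o b : Pt) : det2 o o b = 0 := by unfold det2; ring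
lemma det2_zero_1 (o a : Pt) : det2 o a o = 0 := by unfold det2; ring
lemma det2_zero_2 (o a : Pt) : det2 o a a = 0 := by unfold det2; ring

lemma ne_oa (σ : ℝ) (o a b : Pt) (h : 0 < σ * det2 o a b) : o ≠ a := by
  rintro rfl; rw [det2_zero_0, mul_zero] at h; exact lt_irrefl _ h
lemma ne_ob (σ : ℝ) (o a b : Pt) (h : 0 < σ * det2 o a b) : o ≠ b := by
  rintro rfl; rw [det2_zero_1, mul_zero] at h; exact lt_irrefl _ h
lemma ne_ab (σ : ℝ) (o a b : Pt) (h : 0 < σ * det2 o a b) : a ≠ b := by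
  rintro rfl; rw [det2_zero_2, mul_zero] at h; exact lt_irrefl _ h

lemma collinear_of_det2 (o a b : Pt) (h : det2 o a b = 0) :
    Collinear ℝ ({o, a, b} : Set Pt) := by
  by_cases hao : a = o
  · subst hao
    have : ({a, a, b} : Set Pt) = {a, b} := by ext; simp
    rw [this]; exact collinear_pair ℝ a b
  · have hex : a 0 - o 0 ≠ 0 ∨ a 1 - o 1 ≠ 0 := by
      by_contra hcon
      push_neg at hcon
      exact hao (pt_ext a o (by linarith [hcon.1]) (by linarith [hcon.2]))
    rw [collinear_iff_of_mem (show o ∈ ({o, a, b} : Set Pt) by simp)]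
    refine ⟨a - o, ?_⟩
    intro p hp
    unfold det2 at h
    rcases hp with rfl | rfl | rfl
    · exact ⟨0, by simp⟩
    · exact ⟨1, by simp⟩
    · rcases hex with h0 | h1
      · refine ⟨(p 0 - o 0)/(a 0 - o 0), pt_ext _ _ ?_ ?_⟩ <;>
          simp only [vadd_eq_add, pt_coord_add, pt_coord_smul, pt_coord_sub] <;>
          field_simp <;> nlinarith [h]
      · refine ⟨(p 1 - o 1)/(a 1 - o 1), pt_ext _ _ ?_ ?_⟩ <;>
          simp only [vadd_eq_add, pt_coord_add, pt_coord_smul, pt_coord_sub] <;>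
          field_simp <;> nlinarith [h]

lemma det2_combo2 (o a y z : Pt) (p q : ℝ) (hpq : p + q = 1) :
    det2 o a (p • y + q • z) = p * det2 o a y + q * det2 o a z := by
  unfold det2
  simp only [pt_coord_add, pt_coord_smul]
  linear_combination ((a 0 - o 0) * o 1 - (a 1 - o 1) * o 0) * hpq

lemma det2_combo3 (o a x y z : Pt) (p q r : ℝ) (hpq : p + q + r = 1) :
    det2 o a (p • x + q • y + r • z) =
      p * det2 o a x + q * det2 o a y + r * det2 o a z := by
  unfold det2
  simp only [pt_coord_add, pt_coord_smul]
  linear_combination ((a 0 - o 0) * o 1 - (a 1 - o 1) * o 0) * hpq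

lemma convex_halfplane (σ : ℝ) (e1 e2 : Pt) :
    Convex ℝ {y : Pt | 0 ≤ σ * det2 e1 e2 y} := by
  intro y hy z hz p q hp hq hpq
  simp only [Set.mem_setOf_eq] at *
  rw [det2_combo2 e1 e2 y z p q hpq]
  nlinarith

lemma interior_strict (σ : ℝ) (hσ2 : σ * σ = 1) (e1 e2 : Pt) (hne : e1 ≠ e2) (S : Set Pt)
    (hS : ∀ p ∈ S, 0 ≤ σ * det2 e1 e2 p) (x : Pt)
    (hx : x ∈ interior (convexHull ℝ S)) :
    0 < σ * det2 e1 e2 x := by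
  have hhull : convexHull ℝ S ⊆ {y : Pt | 0 ≤ σ * det2 e1 e2 y} :=
    convexHull_min hS (convex_halfplane σ e1 e2)
  have h0 : 0 ≤ σ * det2 e1 e2 x := hhull (interior_subset hx)
  rcases lt_or_eq_of_le h0 with h | h
  · exact h
  · exfalso
    rw [mem_interior_iff_mem_nhds, Metric.mem_nhds_iff] at hx
    obtain ⟨ε, hε, hball⟩ := hx
    set d0 := e2 0 - e1 0 with hd0
    set d1 := e2 1 - e1 1 with hd1
    have hdd : 0 < d0 * d0 + d1 * d1 := by
      rcases eq_or_ne d0 0 with h0' | h0'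
      · rcases eq_or_ne d1 0 with h1' | h1'
        · exact absurd (pt_ext e1 e2 (by rw [hd0] at h0'; linarith)
            (by rw [hd1] at h1'; linarith)) hne
        · have := mul_self_pos.mpr h1'
          nlinarith [mul_self_nonneg d0]
      · have := mul_self_pos.mpr h0'
        nlinarith [mul_self_nonneg d1]
    set w : Pt := (WithLp.equiv 2 (Fin 2 → ℝ)).symm ![σ * d1, -σ * d0] with hw
    have hw0 : w 0 = σ * d1 := by rw [hw]; simp
    have hw1 : w 1 = -σ * d0 := by rw [hw]; simp
    set δ := ε / (2 * (‖w‖ + 1)) with hδ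
    have hδpos : 0 < δ := by positivity
    set y := x + δ • w with hy
    have hymem : y ∈ Metric.ball x ε := by
      rw [Metric.mem_ball, dist_eq_norm]
      have : y - x = δ • w := by rw [hy]; abel
      rw [this, norm_smul, Real.norm_eq_abs, abs_of_pos hδpos, hδ]
      rw [div_mul_eq_mul_div, div_lt_iff₀ (by positivity)]
      nlinarith [norm_nonneg w]
    have hval : det2 e1 e2 y = det2 e1 e2 x + δ * (d0 * w 1 - d1 * w 0) := by
      rw [hy]; unfold det2; simp only [pt_coord_add, pt_coord_smul]; rw [hd0, hd1]; ring
    have := hhull (hball hymem)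
    simp only [Set.mem_setOf_eq, hval, hw0, hw1] at this
    have key : σ * (det2 e1 e2 x + δ * (d0 * (-σ * d0) - d1 * (σ * d1))) =
        σ * det2 e1 e2 x - δ * (d0 * d0 + d1 * d1) * (σ * σ) := by ring
    rw [key, hσ2, ← h] at this
    nlinarith [mul_pos hδpos hdd]

lemma triangle_coeffs (u v w x : Pt) (hx : x ∈ convexHull ℝ ({u, v, w} : Set Pt)) :
    ∃ α β γ : ℝ, 0 ≤ α ∧ 0 ≤ β ∧ 0 ≤ γ ∧ α + β + γ = 1 ∧ x = α • u + β • v + γ • w := by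
  rw [convexHull_insert (by simp), convexHull_pair, mem_convexJoin] at hx
  obtain ⟨uu, huu, z, hz, hx⟩ := hx
  rw [Set.mem_singleton_iff] at huu
  subst huu
  obtain ⟨r, t, hr, ht, hrt, hz⟩ := hz
  obtain ⟨p, q, hp, hq, hpq, hx⟩ := hx
  exact ⟨p, q * r, q * t, hp, by positivity, by positivity, by nlinarith, by
    rw [← hx, ← hz]; module⟩

lemma triangle_mem_of_coeffs (u v w x : Pt) (α β γ : ℝ) (h0 : 0 ≤ α) (h1 : 0 ≤ β) (h2 : 0 ≤ γ)
    (hs : α + β + γ = 1) (hx : x = α • u + β • v + γ • w) :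
    x ∈ convexHull ℝ ({u, v, w} : Set Pt) := by
  by_cases hbc : β + γ = 0
  · have hβ : β = 0 := by linarith
    have hγ : γ = 0 := by linarith
    have : x = u := by rw [hx, hβ, hγ]; simp; rw [show α = 1 by linarith]; simp
    rw [this]; exact subset_convexHull ℝ _ (by simp)
  · have hbc' : 0 < β + γ := lt_of_le_of_ne (by linarith) (Ne.symm hbc)
    set z : Pt := (β/(β+γ)) • v + (γ/(β+γ)) • w with hz
    have hzmem : z ∈ convexHull ℝ ({u, v, w} : Set Pt) := by
      apply (convex_convexHull ℝ ({u, v, w} : Set Pt))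
        (subset_convexHull ℝ _ (by simp : v ∈ _))
        (subset_convexHull ℝ _ (by simp : w ∈ _)) (by positivity) (by positivity)
      field_simp
    have hseg : x ∈ segment ℝ u z := by
      refine ⟨α, β + γ, h0, le_of_lt hbc', by linarith, ?_⟩
      rw [hx, hz, smul_add, smul_smul, smul_smul]
      rw [mul_div_cancel₀ _ hbc, mul_div_cancel₀ _ hbc]
      module
    exact (convex_convexHull ℝ _).segment_subset (subset_convexHull ℝ _ (by simp)) hzmem hseg

lemma det2_barycenter (u v w x : Pt) :
    det2 u v w • x = det2 v w x • u + det2 w u x • v + det2 u v x • w := by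
  ext i
  fin_cases i <;> simp [det2, pt_coord_add, pt_coord_smul] <;> ring

lemma mem_triangle_of_det (σ : ℝ) (hσ : σ = 1 ∨ σ = -1) (u v w x : Pt)
    (hD : 0 < σ * det2 u v w) (h1 : 0 ≤ σ * det2 v w x) (h2 : 0 ≤ σ * det2 w u x)
    (h3 : 0 ≤ σ * det2 u v x) : x ∈ convexHull ℝ ({u, v, w} : Set Pt) := by
  have hσ0 : σ ≠ 0 := by rcases hσ with rfl | rfl <;> norm_num
  have hDpos : det2 u v w ≠ 0 := by
    intro h; rw [h, mul_zero] at hD; exact lt_irrefl _ hD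
  set D := det2 u v w with hDdef
  have hdiv : ∀ n : ℝ, 0 ≤ σ * n → 0 ≤ n / D := by
    intro n hn
    rw [show n / D = (σ * n) / (σ * D) by rw [mul_div_mul_left _ _ hσ0]]
    exact div_nonneg hn hD.le
  have hsum : det2 v w x + det2 w u x + det2 u v x = D := by
    rw [hDdef]; unfold det2; ring
  apply triangle_mem_of_coeffs u v w x (det2 v w x / D) (det2 w u x / D) (det2 u v x / D)
    (hdiv _ h1) (hdiv _ h2) (hdiv _ h3)
    (by field_simp; linarith [hsum])
  have key := det2_barycenter u v w x
  rw [div_eq_inv_mul, div_eq_inv_mul, div_eq_inv_mul, ← smul_smul, ← smul_smul, ← smul_smul,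
    ← smul_add, ← smul_add, ← key, smul_smul, inv_mul_cancel₀ hDpos, one_smul]

lemma combo_pos (α β γ A B C : ℝ) (hα : 0 ≤ α) (hβ : 0 ≤ β) (hγ : 0 ≤ γ)
    (hsum : α + β + γ = 1) (hA : 0 < A) (hB : 0 < B) (hC : 0 < C) :
    0 < α * A + β * B + γ * C := by
  rcases hα.lt_or_eq with ha | ha
  · nlinarith [mul_pos ha hA, mul_nonneg hβ hB.le, mul_nonneg hγ hC.le]
  · rcases hβ.lt_or_eq with hb | hb
    · nlinarith [mul_pos hb hB, mul_nonneg hγ hC.le]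
    · have : γ = 1 := by linarith
      nlinarith [hC]

lemma sigma_eq (σ1 σ2 x : ℝ) (h1 : σ1 = 1 ∨ σ1 = -1) (h2 : σ2 = 1 ∨ σ2 = -1)
    (p1 : 0 < σ1 * x) (p2 : 0 < σ2 * x) : σ1 = σ2 := by
  rcases h1 with rfl | rfl <;> rcases h2 with rfl | rfl
  · rfl
  · nlinarith
  · nlinarith
  · rfl

lemma strict_from_genpos (P : Set Pt) (hgp : GenPos P) (X Y Z : Pt)
    (hX : X ∈ P) (hY : Y ∈ P) (hZ : Z ∈ P) (h1 : X ≠ Y) (h2 : X ≠ Z) (h3 : Y ≠ Z)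
    (σ : ℝ) (hσ : σ = 1 ∨ σ = -1) (hge : 0 ≤ σ * det2 X Y Z) : 0 < σ * det2 X Y Z := by
  rcases lt_or_eq_of_le hge with h | h
  · exact h
  · exfalso
    have hd : det2 X Y Z = 0 := by rcases hσ with rfl | rfl <;> linarith
    exact hgp X hX Y hY Z hZ h1 h2 h3 (collinear_of_det2 X Y Z hd)


set_option maxHeartbeats 2000000 in
/-- if `s, a, b, c` and `s', a, b, c` are empty convex
quadrilaterals of `P` and `s, a, b, c, s'` is a convex pentagon in that order,
then there is `s''` in `P` in the closed triangle `s c s'` such that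
`s, a, b, c, s''` is a 5-hole of `P`. -/
theorem stmt8 (P : Set Pt) (hPfin : P.Finite) (hgp : GenPos P)
    (s a b c s' : Pt) (hs : s ∈ P) (ha : a ∈ P) (hb : b ∈ P) (hc : c ∈ P) (hs' : s' ∈ P)
    (hq1 : ConvexCyclicOrder ![s, a, b, c])
    (hq1e : ∀ x ∈ P, x ∉ interior (convexHull ℝ ({s, a, b, c} : Set Pt)))
    (hq2 : ConvexCyclicOrder ![s', a, b, c])
    (hq2e : ∀ x ∈ P, x ∉ interior (convexHull ℝ ({s', a, b, c} : Set Pt)))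
    (hpent : ConvexCyclicOrder ![s, a, b, c, s']) :
    ∃ s'' ∈ P, s'' ∈ convexHull ℝ ({s, c, s'} : Set Pt) ∧
      ConvexCyclicOrder ![s, a, b, c, s''] ∧
      ∀ x ∈ P, x ∉ interior (convexHull ℝ ({s, a, b, c, s''} : Set Pt)) := by
  obtain ⟨σ, hσ, hp⟩ := hpent
  have hσ2 : σ * σ = 1 := by rcases hσ with rfl | rfl <;> norm_num
  have hσ0 : σ ≠ 0 := by rcases hσ with rfl | rfl <;> norm_num
  -- pentagon facts
  have p_sab : 0 < σ * det2 s a b := by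
    have := hp 0 2 (by decide) (by decide)
    norm_num [Matrix.cons_val_zero, Matrix.cons_val_one, Matrix.head_cons,
      Matrix.cons_val_succ] at this; exact this
  have p_sac : 0 < σ * det2 s a c := by
    have := hp 0 3 (by decide) (by decide)
    norm_num [Matrix.cons_val_zero, Matrix.cons_val_one, Matrix.head_cons,
      Matrix.cons_val_succ] at this; exact this
  have p_sas' : 0 < σ * det2 s a s' := by
    have := hp 0 4 (by decide) (by decide)
    norm_num [Matrix.cons_val_zero, Matrix.cons_val_one, Matrix.head_cons,
      Matrix.cons_val_succ] at this; exact this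
  have p_abc : 0 < σ * det2 a b c := by
    have := hp 1 3 (by decide) (by decide)
    norm_num [Matrix.cons_val_zero, Matrix.cons_val_one, Matrix.head_cons,
      Matrix.cons_val_succ] at this; exact this
  have p_abs' : 0 < σ * det2 a b s' := by
    have := hp 1 4 (by decide) (by decide)
    norm_num [Matrix.cons_val_zero, Matrix.cons_val_one, Matrix.head_cons,
      Matrix.cons_val_succ] at this; exact this
  have p_abs : 0 < σ * det2 a b s := by
    have := hp 1 0 (by decide) (by decide)
    norm_num [Matrix.cons_val_zero, Matrix.cons_val_one, Matrix.head_cons,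
      Matrix.cons_val_succ] at this; exact this
  have p_bcs' : 0 < σ * det2 b c s' := by
    have := hp 2 4 (by decide) (by decide)
    norm_num [Matrix.cons_val_zero, Matrix.cons_val_one, Matrix.head_cons,
      Matrix.cons_val_succ] at this; exact this
  have p_bcs : 0 < σ * det2 b c s := by
    have := hp 2 0 (by decide) (by decide)
    norm_num [Matrix.cons_val_zero, Matrix.cons_val_one, Matrix.head_cons,
      Matrix.cons_val_succ] at this; exact this
  have p_bca : 0 < σ * det2 b c a := by
    have := hp 2 1 (by decide) (by decide)
    norm_num [Matrix.cons_val_zero, Matrix.cons_val_one, Matrix.head_cons,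
      Matrix.cons_val_succ] at this; exact this
  have p_cs's : 0 < σ * det2 c s' s := by
    have := hp 3 0 (by decide) (by decide)
    norm_num [Matrix.cons_val_zero, Matrix.cons_val_one, Matrix.head_cons,
      Matrix.cons_val_succ] at this; exact this
  have p_cs'a : 0 < σ * det2 c s' a := by
    have := hp 3 1 (by decide) (by decide)
    norm_num [Matrix.cons_val_zero, Matrix.cons_val_one, Matrix.head_cons,
      Matrix.cons_val_succ] at this; exact this
  have p_cs'b : 0 < σ * det2 c s' b := by
    have := hp 3 2 (by decide) (by decide)
    norm_num [Matrix.cons_val_zero, Matrix.cons_val_one, Matrix.head_cons,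
      Matrix.cons_val_succ] at this; exact this
  have p_s'sa : 0 < σ * det2 s' s a := by
    have := hp 4 1 (by decide) (by decide)
    norm_num [Matrix.cons_val_zero, Matrix.cons_val_one, Matrix.head_cons,
      Matrix.cons_val_succ] at this; exact this
  have p_s'sb : 0 < σ * det2 s' s b := by
    have := hp 4 2 (by decide) (by decide)
    norm_num [Matrix.cons_val_zero, Matrix.cons_val_one, Matrix.head_cons,
      Matrix.cons_val_succ] at this; exact this
  have p_s'sc : 0 < σ * det2 s' s c := by
    have := hp 4 3 (by decide) (by decide)
    norm_num [Matrix.cons_val_zero, Matrix.cons_val_one, Matrix.head_cons,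
      Matrix.cons_val_succ] at this; exact this
  -- quadrilateral 1 facts
  obtain ⟨σ1, hσ1, hq⟩ := hq1
  have q1_sab : 0 < σ1 * det2 s a b := by
    have := hq 0 2 (by decide) (by decide)
    norm_num [Matrix.cons_val_zero, Matrix.cons_val_one, Matrix.head_cons,
      Matrix.cons_val_succ] at this; exact this
  have hσeq : σ1 = σ := sigma_eq σ1 σ (det2 s a b) hσ1 hσ q1_sab p_sab
  subst hσeq
  have q_sac : 0 < σ1 * det2 s a c := by
    have := hq 0 3 (by decide) (by decide)
    norm_num [Matrix.cons_val_zero, Matrix.cons_val_one, Matrix.head_cons,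
      Matrix.cons_val_succ] at this; exact this
  have q_abc : 0 < σ1 * det2 a b c := by
    have := hq 1 3 (by decide) (by decide)
    norm_num [Matrix.cons_val_zero, Matrix.cons_val_one, Matrix.head_cons,
      Matrix.cons_val_succ] at this; exact this
  have q_abs : 0 < σ1 * det2 a b s := by
    have := hq 1 0 (by decide) (by decide)
    norm_num [Matrix.cons_val_zero, Matrix.cons_val_one, Matrix.head_cons,
      Matrix.cons_val_succ] at this; exact this
  have q_bcs : 0 < σ1 * det2 b c s := by
    have := hq 2 0 (by decide) (by decide)
    norm_num [Matrix.cons_val_zero, Matrix.cons_val_one, Matrix.head_cons,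
      Matrix.cons_val_succ] at this; exact this
  have q_bca : 0 < σ1 * det2 b c a := by
    have := hq 2 1 (by decide) (by decide)
    norm_num [Matrix.cons_val_zero, Matrix.cons_val_one, Matrix.head_cons,
      Matrix.cons_val_succ] at this; exact this
  have q_csa : 0 < σ1 * det2 c s a := by
    have := hq 3 1 (by decide) (by decide)
    norm_num [Matrix.cons_val_zero, Matrix.cons_val_one, Matrix.head_cons,
      Matrix.cons_val_succ] at this; exact this
  have q_csb : 0 < σ1 * det2 c s b := by
    have := hq 3 2 (by decide) (by decide)
    norm_num [Matrix.cons_val_zero, Matrix.cons_val_one, Matrix.head_cons,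
      Matrix.cons_val_succ] at this; exact this
  clear hq hp hq2 hσ1
  set σ := σ1 with hσname
  -- basic distinctness
  have hsa : s ≠ a := ne_oa σ s a b p_sab
  have hab : a ≠ b := ne_oa σ a b c p_abc
  have hbc : b ≠ c := ne_oa σ b c s p_bcs
  have hsc : s ≠ c := ne_ab σ s' s c p_s'sc
  have hsb : s ≠ b := ne_ab σ s' s b p_s'sb
  have hca : c ≠ a := ne_ob σ c s a q_csa
  -- the point s' is strictly on the far side of line s-c
  have hscs' : 0 < σ * det2 s c s' := by
    have e : σ * det2 s c s' = σ * det2 c s' s := by unfold det2; ring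
    rw [e]; exact p_cs's
  -- choose s'' minimizing σ * det2 s c · over candidates
  set S : Set Pt := {x | x ∈ P ∧ x ∈ convexHull ℝ ({s, c, s'} : Set Pt) ∧ 0 < σ * det2 s c x}
    with hSdef
  have hSfin : S.Finite := hPfin.subset (fun x hx => hx.1)
  have hSne : S.Nonempty :=
    ⟨s', hs', subset_convexHull ℝ _ (by simp), hscs'⟩
  obtain ⟨s'', hs''S, hmin⟩ := Set.exists_min_image S (fun x => σ * det2 s c x) hSfin hSne
  obtain ⟨hs''P, hs''T, h3⟩ := hs''S
  -- more distinctness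
  have hss'' : s ≠ s'' := ne_ob σ s c s'' h3
  have hcs'' : c ≠ s'' := ne_ab σ s c s'' h3
  have has'' : a ≠ s'' := by
    rintro rfl
    have e : σ * det2 s c a = -(σ * det2 c s a) := by unfold det2; ring
    linarith [q_csa, h3, e.ge, e.le]
  have hbs'' : b ≠ s'' := by
    rintro rfl
    have e : σ * det2 s c b = -(σ * det2 c s b) := by unfold det2; ring
    linarith [q_csb, h3, e.ge, e.le]
  -- barycentric coordinates of s'' in triangle s c s'
  obtain ⟨α, β, γ, hα, hβ, hγ, hsum, hxeq⟩ := triangle_coeffs s c s' s'' hs''T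
  have heval : ∀ o p : Pt, det2 o p s'' =
      α * det2 o p s + β * det2 o p c + γ * det2 o p s' := fun o p => by
    rw [hxeq]; exact det2_combo3 o p s c s' α β γ hsum
  -- the new determinant facts
  have n_sas'' : 0 < σ * det2 s a s'' := by
    apply strict_from_genpos P hgp s a s'' hs ha hs''P hsa hss'' has'' σ hσ
    have e : σ * det2 s a s'' = β * (σ * det2 s a c) + γ * (σ * det2 s a s') := by
      rw [heval s a, det2_zero_1]; ring
    rw [e]
    exact add_nonneg (mul_nonneg hβ q_sac.le) (mul_nonneg hγ p_sas'.le)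
  have n_abs'' : 0 < σ * det2 a b s'' := by
    have e : σ * det2 a b s'' =
        α * (σ * det2 a b s) + β * (σ * det2 a b c) + γ * (σ * det2 a b s') := by
      rw [heval a b]; ring
    rw [e]
    exact combo_pos α β γ _ _ _ hα hβ hγ hsum q_abs q_abc p_abs'
  have n_bcs'' : 0 < σ * det2 b c s'' := by
    apply strict_from_genpos P hgp b c s'' hb hc hs''P hbc hbs'' hcs'' σ hσ
    have e : σ * det2 b c s'' = α * (σ * det2 b c s) + γ * (σ * det2 b c s') := by
      rw [heval b c, det2_zero_2]; ring
    rw [e]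
    exact add_nonneg (mul_nonneg hα q_bcs.le) (mul_nonneg hγ p_bcs'.le)
  have n_cs''s : 0 < σ * det2 c s'' s := by
    have e : σ * det2 c s'' s = σ * det2 s c s'' := by unfold det2; ring
    rw [e]; exact h3
  have n_cs''a : 0 < σ * det2 c s'' a := by
    apply strict_from_genpos P hgp c s'' a hc hs''P ha hcs'' hca has''.symm σ hσ
    have e : σ * det2 c s'' a = α * (σ * det2 c s a) + γ * (σ * det2 c s' a) := by
      have h := heval c a
      have e1 : det2 c s'' a = -det2 c a s'' := by unfold det2; ring
      have e2 : det2 c a s = -det2 c s a := by unfold det2; ring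
      have e3 : det2 c a s' = -det2 c s' a := by unfold det2; ring
      have e4 : det2 c a c = 0 := det2_zero_1 c a
      rw [e1, h, e2, e3, e4]; ring
    rw [e]
    exact add_nonneg (mul_nonneg hα q_csa.le) (mul_nonneg hγ p_cs'a.le)
  have n_cs''b : 0 < σ * det2 c s'' b := by
    have e : σ * det2 c s'' b = σ * det2 b c s'' := by unfold det2; ring
    rw [e]; exact n_bcs''
  have n_s''sa : 0 < σ * det2 s'' s a := by
    have e : σ * det2 s'' s a = σ * det2 s a s'' := by unfold det2; ring
    rw [e]; exact n_sas''
  have n_s''sb : 0 < σ * det2 s'' s b := by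
    apply strict_from_genpos P hgp s'' s b hs''P hs hb hss''.symm hbs''.symm hsb σ hσ
    have e : σ * det2 s'' s b = β * (σ * det2 b c s) + γ * (σ * det2 s' s b) := by
      have h := heval s b
      have e1 : det2 s'' s b = det2 s b s'' := by unfold det2; ring
      have e2 : det2 s b s = 0 := det2_zero_1 s b
      have e3 : det2 s b c = det2 b c s := by unfold det2; ring
      have e4 : det2 s b s' = det2 s' s b := by unfold det2; ring
      rw [e1, h, e2, e3, e4]; ring
    rw [e]
    exact add_nonneg (mul_nonneg hβ q_bcs.le) (mul_nonneg hγ p_s'sb.le)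
  have n_s''sc : 0 < σ * det2 s'' s c := by
    have e : σ * det2 s'' s c = σ * det2 s c s'' := by unfold det2; ring
    rw [e]; exact h3
  refine ⟨s'', hs''P, hs''T, ?_, ?_⟩
  · -- convex cyclic order of the new pentagon
    refine ⟨σ, hσ, ?_⟩
    intro i j hj1 hj2
    fin_cases i <;> fin_cases j <;>
      first
        | exact absurd rfl hj1
        | exact absurd (by decide) hj2
        | (norm_num [Matrix.cons_val_zero, Matrix.cons_val_one, Matrix.head_cons,
            Matrix.cons_val_succ]; assumption)
  · -- emptiness
    intro x hxP hxint
    have hedge : ∀ e1 e2 : Pt, e1 ≠ e2 →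
        (∀ p ∈ ({s, a, b, c, s''} : Set Pt), 0 ≤ σ * det2 e1 e2 p) →
        0 < σ * det2 e1 e2 x := fun e1 e2 hne hall =>
      interior_strict σ hσ2 e1 e2 hne _ hall x hxint
    have Esa : 0 < σ * det2 s a x := by
      apply hedge s a hsa
      intro p hp
      simp only [Set.mem_insert_iff, Set.mem_singleton_iff] at hp
      rcases hp with rfl | rfl | rfl | rfl | rfl
      · exact le_of_eq (by rw [det2_zero_1, mul_zero])
      · exact le_of_eq (by rw [det2_zero_2, mul_zero])
      · exact p_sab.le
      · exact p_sac.le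
      · exact n_sas''.le
    have Eab : 0 < σ * det2 a b x := by
      apply hedge a b hab
      intro p hp
      simp only [Set.mem_insert_iff, Set.mem_singleton_iff] at hp
      rcases hp with rfl | rfl | rfl | rfl | rfl
      · exact p_abs.le
      · exact le_of_eq (by rw [det2_zero_1, mul_zero])
      · exact le_of_eq (by rw [det2_zero_2, mul_zero])
      · exact p_abc.le
      · exact n_abs''.le
    have Ebc : 0 < σ * det2 b c x := by
      apply hedge b c hbc
      intro p hp
      simp only [Set.mem_insert_iff, Set.mem_singleton_iff] at hp
      rcases hp with rfl | rfl | rfl | rfl | rfl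
      · exact p_bcs.le
      · exact p_bca.le
      · exact le_of_eq (by rw [det2_zero_1, mul_zero])
      · exact le_of_eq (by rw [det2_zero_2, mul_zero])
      · exact n_bcs''.le
    have Ecs'' : 0 < σ * det2 c s'' x := by
      apply hedge c s'' hcs''
      intro p hp
      simp only [Set.mem_insert_iff, Set.mem_singleton_iff] at hp
      rcases hp with rfl | rfl | rfl | rfl | rfl
      · exact n_cs''s.le
      · exact n_cs''a.le
      · exact n_cs''b.le
      · exact le_of_eq (by rw [det2_zero_1, mul_zero])
      · exact le_of_eq (by rw [det2_zero_2, mul_zero])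
    have Es''s : 0 < σ * det2 s'' s x := by
      apply hedge s'' s hss''.symm
      intro p hp
      simp only [Set.mem_insert_iff, Set.mem_singleton_iff] at hp
      rcases hp with rfl | rfl | rfl | rfl | rfl
      · exact le_of_eq (by rw [det2_zero_2, mul_zero])
      · exact n_s''sa.le
      · exact n_s''sb.le
      · exact n_s''sc.le
      · exact le_of_eq (by rw [det2_zero_1, mul_zero])
    rcases lt_trichotomy (σ * det2 s c x) 0 with ht | ht | ht
    · -- x would be interior to the quadrilateral s a b c
      have Ecs : 0 < σ * det2 c s x := by
        have e : σ * det2 c s x = -(σ * det2 s c x) := by unfold det2; ring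
      
        rw [e]; linarith
      set U : Set Pt := {y | 0 < σ * det2 s a y} ∩ {y | 0 < σ * det2 a b y} ∩
        {y | 0 < σ * det2 b c y} ∩ {y | 0 < σ * det2 c s y} with hU
      have hUopen : IsOpen U := by
        refine IsOpen.inter (IsOpen.inter (IsOpen.inter ?_ ?_) ?_) ?_ <;>
          exact isOpen_lt continuous_const (by unfold det2; fun_prop)
      have hUsub : U ⊆ convexHull ℝ ({s, a, b, c} : Set Pt) := by
        rintro y ⟨⟨⟨h1, h2⟩, h3'⟩, h4⟩
        rcases le_or_gt 0 (σ * det2 s b y) with hsby | hsby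
        · have : y ∈ convexHull ℝ ({s, b, c} : Set Pt) := by
            apply mem_triangle_of_det σ hσ s b c y
            · have e : σ * det2 s b c = σ * det2 b c s := by unfold det2; ring
              rw [e]; exact q_bcs
            · exact h3'.le
            · exact h4.le
            · exact hsby
          exact convexHull_mono (by intro z hz; simp at hz ⊢; tauto) this
        · have : y ∈ convexHull ℝ ({s, a, b} : Set Pt) := by
            apply mem_triangle_of_det σ hσ s a b y
            · exact p_sab
            · exact h2.le
            · have e : σ * det2 b s y = -(σ * det2 s b y) := by unfold det2; ring
              rw [e]; linarith
            · exact h1.le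
          exact convexHull_mono (by intro z hz; simp at hz ⊢; tauto) this
      exact hq1e x hxP (hUopen.subset_interior_iff.mpr hUsub ⟨⟨⟨Esa, Eab⟩, Ebc⟩, Ecs⟩)
    · -- x on line s c : contradicts general position
      have hdet0 : det2 s c x = 0 := (mul_eq_zero.mp ht).resolve_left hσ0
      have hsx : s ≠ x := ne_ab σ s'' s x Es''s
      have hcx : c ≠ x := ne_ob σ c s'' x Ecs''
      exact hgp s hs c hc x hxP hsc hsx hcx (collinear_of_det2 s c x hdet0)
    · -- x inside triangle s c s'' : contradicts minimality
      have hxT : x ∈ convexHull ℝ ({s, c, s''} : Set Pt) :=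
        mem_triangle_of_det σ hσ s c s'' x h3 Ecs''.le Es''s.le ht.le
      have hsub : convexHull ℝ ({s, c, s''} : Set Pt) ⊆
          convexHull ℝ ({s, c, s'} : Set Pt) := by
        apply convexHull_min _ (convex_convexHull ℝ _)
        rintro p hp
        simp only [Set.mem_insert_iff, Set.mem_singleton_iff] at hp
        rcases hp with rfl | rfl | rfl
        · exact subset_convexHull ℝ _ (by simp)
        · exact subset_convexHull ℝ _ (by simp)
        · exact hs''T
      have hxS : x ∈ S := ⟨hxP, hsub hxT, ht⟩
      have hminx := hmin x hxS
      obtain ⟨α', β', γ', hα', hβ', hγ', hsum', hxeq'⟩ := triangle_coeffs s c s'' x hxT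
      have he : σ * det2 s c x = γ' * (σ * det2 s c s'') := by
        rw [hxeq', det2_combo3 s c s c s'' α' β' γ' hsum', det2_zero_1, det2_zero_2]; ring
      have hγ1 : 1 ≤ γ' := by
        rw [he] at hminx
        nlinarith
      have hα0 : α' = 0 := by linarith
      have hβ0 : β' = 0 := by linarith
      have hγ'1 : γ' = 1 := by linarith
      have hxs'' : x = s'' := by
        rw [hxeq', hα0, hβ0, hγ'1]; simp
      rw [hxs''] at Ecs''
      rw [det2_zero_2, mul_zero] at Ecs''
      exact lt_irrefl _ Ecs''
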